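/- For any marked tree \widehat{T} in F(C' → C) (i.e., R(f(\widehat{T})) = C' and R(f(π(\widehat{T}))) = C), one has \hat{μ}(\widehat{T}) = μ(f(\widehat{T})) · W(C' → C), where μ(T) = α^{-l(T)} β^{-r(T)} and \hat{μ} excludes the marked vertex from the counts l, r. -/

import Mathlib

/-- Plane binary trees: every internal vertex has exactly two ordered children. -/
inductive PTree where
  | leaf : PTree
  | node : PTree → PTree → PTree
  deriving DecidableEq

namespace PTree

/-- number of leaves (endpoints) -/
def numLeaves : PTree → ℕ
  | leaf => 1
  | node l r => numLeaves l + numLeaves r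

/-- directions of the leaves of a subtree which is itself a `b`-child
(`true` = left child, `false` = right child), in left-to-right order. -/
def dirsAux : PTree → Bool → List Bool
  | leaf, b => [b]
  | node l r, _ => dirsAux l true ++ dirsAux r false

/-- the left/right-child directions of all leaves of a tree, left to right
(`true` = left child, `false` = right child). -/
def dirs : PTree → List Bool
  | leaf => []
  | node l r => dirsAux l true ++ dirsAux r false

/-- The reduction map `R`: the directions of the 2nd through (n+1)-th leaves;
`true` = • (occupied site, left child), `false` = ∘ (empty site, right child). -/
def red (T : PTree) : List Bool := ((dirs T).drop 1).dropLast

/-- number of internal vertices on the path from the leftmost leaf to the root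
(root included). -/
def lCount : PTree → ℕ
  | leaf => 0
  | node l _ => lCount l + 1

/-- number of internal vertices on the path from the rightmost leaf to the root
(root included). -/
def rCount : PTree → ℕ
  | leaf => 0
  | node _ r => rCount r + 1

/-- number of last branching vertices (internal vertices whose two children are leaves). -/
def lbCount : PTree → ℕ
  | leaf => 0
  | node leaf leaf => 1
  | node l r => lbCount l + lbCount r

end PTree

/-- Marked plane binary trees: a plane binary tree with exactly one of its
last branching vertices marked (the constructor `mark` is the marked vertex,
a vertex with two leaf children). -/
inductive MTree where
  | mark : MTree
  | nodeL : MTree → PTree → MTree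
  | nodeR : PTree → MTree → MTree
  deriving DecidableEq

namespace MTree

/-- forgetful map to plane binary trees -/
def forget : MTree → PTree
  | mark => .node .leaf .leaf
  | nodeL l r => .node (forget l) r
  | nodeR l r => .node l (forget r)

/-- collapse the marked vertex (with its two leaf children) to a single leaf. -/
def collapseT : MTree → PTree
  | mark => .leaf
  | nodeL l r => .node (collapseT l) r
  | nodeR l r => .node l (collapseT r)

/-- index (left to right, starting from 0) of the leaf of `collapseT` obtained
by collapsing the marked vertex. -/
def markIdx : MTree → ℕ
  | mark => 0
  | nodeL l _ => markIdx l
  | nodeR l r => l.numLeaves + markIdx r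

end MTree

/-- replace the `i`-th leaf of a tree by a marked last branching vertex. -/
def expand : PTree → ℕ → MTree
  | .leaf, _ => .mark
  | .node l r, i =>
      if i < l.numLeaves then .nodeL (expand l i) r
      else .nodeR l (expand r (i - l.numLeaves))

/-- index of the next right-child (`false`) leaf strictly after position `i`;
if there is none, the index of the rightmost left-child (`true`) leaf. -/
def nextFalseIdx (w : List Bool) (i : ℕ) : ℕ :=
  if (w.drop (i+1)).findIdx (fun b => !b) < (w.drop (i+1)).length
  then i + 1 + (w.drop (i+1)).findIdx (fun b => !b)
  else w.length - 1 - (w.reverse.findIdx (fun b => b))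

/-- index of the closest left-child (`true`) leaf strictly before position `i`;
if there is none, the index of the leftmost right-child (`false`) leaf. -/
def prevTrueIdx (w : List Bool) (i : ℕ) : ℕ :=
  if ((w.take i).reverse).findIdx (fun b => b) < i
  then i - 1 - ((w.take i).reverse).findIdx (fun b => b)
  else w.findIdx (fun b => !b)

/-- position of the leaf where the removed segment is re-glued by `π`. -/
def target (w : List Bool) (i : ℕ) : ℕ :=
  if w.getD i true then prevTrueIdx w i else nextFalseIdx w i

/-- The map `π` on marked trees: remove the segment joining the marked vertex to
its left (resp. right) leaf when the marked vertex is a right (resp. left) child,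
and glue it to the next right- (resp. left-) child leaf to the right (resp. left),
with the boundary rule when no such leaf exists; the new vertex is marked. -/
def piM (M : MTree) : MTree :=
  expand M.collapseT (target M.collapseT.dirs M.markIdx)

open Classical in
/-- Transition rates of the `n`-site open-boundary TASEP, on configurations
encoded as lists of booleans (`true` = •, `false` = ∘). -/
noncomputable def rate (α β : ℝ) (C C' : List Bool) : ℝ :=
  if ∃ A, C = false :: A ∧ C' = true :: A then α
  else if ∃ A, C = A ++ [true] ∧ C' = A ++ [false] then β
  else if ∃ A A', C = A ++ true :: false :: A' ∧ C' = A ++ false :: true :: A' then 1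
  else 0

/-- number of active bonds of a configuration: injection at site 1 if empty,
extraction at site n if occupied, and hops across •∘ pairs. -/
def activeCount (C : List Bool) : ℕ :=
  (if C.head? = some false then 1 else 0) +
  ((C.zip C.tail).count (true, false)) +
  (if C.getLast? = some true then 1 else 0)

/-- the weight `μ(T) = α^{-l(T)} β^{-r(T)}` of a plane binary tree. -/
noncomputable def mu (α β : ℝ) (T : PTree) : ℝ :=
  α ^ (-(T.lCount : ℤ)) * β ^ (-(T.rCount : ℤ))

/-- number of internal vertices on the path from the leftmost leaf to the root,
excluding the marked vertex. -/
def lCountM : MTree → ℕ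
  | .mark => 0
  | .nodeL l _ => lCountM l + 1
  | .nodeR l _ => l.lCount + 1

/-- number of internal vertices on the path from the rightmost leaf to the root,
excluding the marked vertex. -/
def rCountM : MTree → ℕ
  | .mark => 0
  | .nodeR _ r => rCountM r + 1
  | .nodeL _ r => r.rCount + 1

/-- the weight `μ̂` of a marked tree, excluding the marked vertex from the counts. -/
noncomputable def muHat (α β : ℝ) (M : MTree) : ℝ :=
  α ^ (-(lCountM M : ℤ)) * β ^ (-(rCountM M : ℤ))



namespace Aux
open PTree MTree List

def insTF (w : List Bool) (i : ℕ) : List Bool :=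
  w.take i ++ [true, false] ++ w.drop (i+1)

def red' (l : List Bool) : List Bool := (l.drop 1).dropLast

lemma numLeaves_pos (T : PTree) : 0 < T.numLeaves := by
  induction T with
  | leaf => simp [PTree.numLeaves]
  | node l r ihl ihr => simp only [PTree.numLeaves]; omega

lemma length_dirsAux (T : PTree) (b : Bool) : (dirsAux T b).length = T.numLeaves := by
  induction T generalizing b with
  | leaf => rfl
  | node l r ihl ihr => simp [PTree.dirsAux, PTree.numLeaves, ihl, ihr]

lemma dirsAux_ne_nil (T : PTree) (b : Bool) : dirsAux T b ≠ [] := by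
  have h1 := length_dirsAux T b
  have h2 := numLeaves_pos T
  intro h; rw [h] at h1; simp at h1; omega

lemma head?_dirsAux (T : PTree) : (dirsAux T true).head? = some true := by
  induction T with
  | leaf => rfl
  | node l r ihl ihr =>
    rw [PTree.dirsAux, List.head?_append_of_ne_nil _ (dirsAux_ne_nil l true), ihl]

lemma getLast?_dirsAux (T : PTree) : (dirsAux T false).getLast? = some false := by
  induction T with
  | leaf => rfl
  | node l r ihl ihr =>
    rw [PTree.dirsAux, List.getLast?_append_of_ne_nil _ (dirsAux_ne_nil r false), ihr]

lemma length_dirs_node (l r : PTree) :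
    (PTree.node l r).dirs.length = (PTree.node l r).numLeaves := by
  simp [PTree.dirs, PTree.numLeaves, length_dirsAux]

lemma head?_dirs_node (l r : PTree) : (PTree.node l r).dirs.head? = some true := by
  rw [PTree.dirs, List.head?_append_of_ne_nil _ (dirsAux_ne_nil l true), head?_dirsAux]

lemma getLast?_dirs_node (l r : PTree) : (PTree.node l r).dirs.getLast? = some false := by
  rw [PTree.dirs, List.getLast?_append_of_ne_nil _ (dirsAux_ne_nil r false), getLast?_dirsAux]

lemma markIdx_lt (M : MTree) : M.markIdx < M.collapseT.numLeaves := by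
  induction M with
  | mark => simp [MTree.markIdx, MTree.collapseT, PTree.numLeaves]
  | nodeL l r ih =>
    have := numLeaves_pos r
    simp only [MTree.markIdx, MTree.collapseT, PTree.numLeaves]; omega
  | nodeR l r ih =>
    simp only [MTree.markIdx, MTree.collapseT, PTree.numLeaves]; omega

lemma expand_collapseT (M : MTree) : expand M.collapseT M.markIdx = M := by
  induction M with
  | mark => rfl
  | nodeL l r ih =>
    have h := markIdx_lt l
    simp only [MTree.collapseT, MTree.markIdx, expand]
    rw [if_pos h, ih]
  | nodeR l r ih =>
    simp only [MTree.collapseT, MTree.markIdx, expand]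
    rw [if_neg (by omega), Nat.add_sub_cancel_left, ih]

lemma numLeaves_forget_expand (T : PTree) (i : ℕ) :
    (expand T i).forget.numLeaves = T.numLeaves + 1 := by
  induction T generalizing i with
  | leaf => rfl
  | node l r ihl ihr =>
    rw [expand]
    split
    · simp only [MTree.forget, PTree.numLeaves, ihl]; omega
    · simp only [MTree.forget, PTree.numLeaves, ihr]; omega

lemma lCount_forget_expand (T : PTree) (i : ℕ) (h : i < T.numLeaves) :
    (expand T i).forget.lCount = T.lCount + (if i = 0 then 1 else 0) := by
  induction T generalizing i with
  | leaf => simp only [PTree.numLeaves] at h; interval_cases i; rfl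
  | node l r ihl ihr =>
    rw [expand]
    split
    · next h1 => simp only [MTree.forget, PTree.lCount, ihl i h1]; omega
    · next h1 =>
      have := numLeaves_pos l
      simp only [MTree.forget, PTree.lCount]
      rw [if_neg (by omega)]

lemma rCount_forget_expand (T : PTree) (i : ℕ) (h : i < T.numLeaves) :
    (expand T i).forget.rCount = T.rCount + (if i + 1 = T.numLeaves then 1 else 0) := by
  induction T generalizing i with
  | leaf => simp only [PTree.numLeaves] at h; interval_cases i; rfl
  | node l r ihl ihr =>
    rw [expand]
    split
    · next h1 =>
      have := numLeaves_pos r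
      simp only [MTree.forget, PTree.rCount, PTree.numLeaves]
      show _ = r.rCount + 1 + (if i + 1 = l.numLeaves + r.numLeaves then 1 else 0)
      rw [if_neg (by omega)]
    · next h1 =>
      have h2 : i - l.numLeaves < r.numLeaves := by
        simp only [PTree.numLeaves] at h; omega
      simp only [MTree.forget, PTree.rCount, PTree.numLeaves, ihr _ h2]
      by_cases h3 : i + 1 = l.numLeaves + r.numLeaves
      · show _ = r.rCount + 1 + (if i + 1 = l.numLeaves + r.numLeaves then 1 else 0)
        rw [if_pos (by omega), if_pos h3]
      · show _ = r.rCount + 1 + (if i + 1 = l.numLeaves + r.numLeaves then 1 else 0)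
        rw [if_neg (by omega), if_neg h3]

lemma lCountM_expand (T : PTree) (i : ℕ) : lCountM (expand T i) = T.lCount := by
  induction T generalizing i with
  | leaf => rfl
  | node l r ihl ihr =>
    rw [expand]; split
    · simp only [lCountM, PTree.lCount, ihl]
    · simp only [lCountM, PTree.lCount]

lemma rCountM_expand (T : PTree) (i : ℕ) : rCountM (expand T i) = T.rCount := by
  induction T generalizing i with
  | leaf => rfl
  | node l r ihl ihr =>
    rw [expand]; split
    · simp only [rCountM, PTree.rCount]
    · simp only [rCountM, PTree.rCount, ihr]

lemma dirsAux_forget_expand (T : PTree) (b : Bool) (i : ℕ) (h : i < T.numLeaves) :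
    dirsAux (expand T i).forget b =
      (dirsAux T b).take i ++ [true, false] ++ (dirsAux T b).drop (i+1) := by
  induction T generalizing b i with
  | leaf =>
    simp only [PTree.numLeaves] at h
    interval_cases i
    simp [expand, MTree.forget, PTree.dirsAux]
  | node l r ihl ihr =>
    have hl := length_dirsAux l true
    rw [expand]
    split
    · next h1 =>
      simp only [MTree.forget, PTree.dirsAux, ihl true i h1]
      rw [List.take_append_of_le_length (by omega),
        List.drop_append_of_le_length (by omega)]
      simp
    · next h1 =>
      have h2 : i - l.numLeaves < r.numLeaves := by
        simp only [PTree.numLeaves] at h; omega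
      have h4 : i + 1 - (l.dirsAux true).length = (i - l.numLeaves) + 1 := by
        rw [hl]; omega
      have h5 : i - (l.dirsAux true).length = i - l.numLeaves := by rw [hl]
      simp only [MTree.forget, PTree.dirsAux, ihr false _ h2]
      rw [List.take_append, List.drop_append,
        List.take_of_length_le (l := l.dirsAux true) (by rw [hl]; omega),
        List.drop_eq_nil_of_le (as := l.dirsAux true) (by rw [hl]; omega), h4, h5]
      simp

lemma dirs_forget_expand (T : PTree) (i : ℕ) (h : i < T.numLeaves) :
    (expand T i).forget.dirs = insTF T.dirs i := by
  cases T with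
  | leaf =>
    simp only [PTree.numLeaves] at h
    interval_cases i
    simp [expand, MTree.forget, PTree.dirs, PTree.dirsAux, insTF]
  | node l r =>
    have h1 : (expand (PTree.node l r) i).forget.dirs
        = dirsAux (expand (PTree.node l r) i).forget true := by
      rw [expand]; split <;> rfl
    have h2 : (PTree.node l r).dirs = dirsAux (PTree.node l r) true := rfl
    rw [h1, dirsAux_forget_expand _ _ _ h, insTF, h2]

lemma findIdx_TF (k : ℕ) (y : List Bool) :
    List.findIdx (fun b => !b) (List.replicate k true ++ false :: y) = k := by
  induction k with
  | zero => simp [List.findIdx_cons]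
  | succ k ih => rw [List.replicate_succ, List.cons_append, List.findIdx_cons]; simp [ih]

lemma findIdx_FT (k : ℕ) (y : List Bool) :
    List.findIdx (fun b => b) (List.replicate k false ++ true :: y) = k := by
  induction k with
  | zero => simp [List.findIdx_cons]
  | succ k ih => rw [List.replicate_succ, List.cons_append, List.findIdx_cons]; simp [ih]

lemma bool_split (b : Bool) (w : List Bool) (h : b ∈ w) :
    ∃ k y, w = List.replicate k (!b) ++ b :: y := by
  induction w with
  | nil => simp at h
  | cons c t ih =>
    by_cases hc : c = b
    · exact ⟨0, t, by simp [hc]⟩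
    · have hbt : b ∈ t := by
        rcases List.mem_cons.mp h with h1 | h1
        · exact absurd h1.symm hc
        · exact h1
      obtain ⟨k, y, hw⟩ := ih hbt
      refine ⟨k + 1, y, ?_⟩
      have hcb : c = !b := by cases b <;> cases c <;> simp_all
      rw [List.replicate_succ, List.cons_append, hcb, hw]

lemma cons_of_head? {l : List Bool} {a : Bool} (h : l.head? = some a) : ∃ t, l = a :: t := by
  cases l with
  | nil => simp at h
  | cons b t => simp only [List.head?_cons, Option.some.injEq] at h; exact ⟨t, by rw [h]⟩

lemma mem_of_getLast?' {l : List Bool} {a : Bool} (h : l.getLast? = some a) : a ∈ l := by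
  cases l with
  | nil => simp at h
  | cons b t =>
    rw [List.getLast?_eq_getLast (l := b :: t) (by simp)] at h
    injection h with h
    rw [← h]; exact List.getLast_mem _

lemma rep_comm (k : ℕ) (b : Bool) (s : List Bool) :
    List.replicate k b ++ b :: s = b :: (List.replicate k b ++ s) := by
  rw [show List.replicate k b ++ b :: s = (List.replicate k b ++ [b]) ++ s by simp,
    ← List.replicate_succ', List.replicate_succ, List.cons_append]

lemma red'_append_cons (x : List Bool) (b : Bool) (Z : List Bool) (hZ : Z ≠ []) :
    red' ((x ++ [b]) ++ Z) = (x ++ [b]).drop 1 ++ Z.dropLast := by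
  rw [red', List.drop_append_of_le_length (by simp), List.dropLast_append_of_ne_nil hZ]

lemma caseA (w y : List Bool) (k : ℕ) (hk : 1 ≤ k)
    (hw : w = List.replicate k true ++ false :: y) :
    target w 0 = k ∧
    ∃ A, red' (insTF w 0) = false :: A ∧ red' (insTF w k) = true :: A := by
  obtain ⟨k', rfl⟩ : ∃ k', k = k' + 1 := ⟨k - 1, by omega⟩
  have hco : w = true :: (List.replicate k' true ++ false :: y) := by
    rw [hw, List.replicate_succ, List.cons_append]
  have hd : w.getD 0 true = true := by rw [hco]; rfl
  refine ⟨?_, List.replicate k' true ++ (false :: y).dropLast, ?_, ?_⟩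
  · unfold target
    rw [if_pos hd]
    unfold prevTrueIdx
    rw [if_neg (by omega), hw, findIdx_TF]
  · have h1 : insTF w 0 = (([] : List Bool) ++ [true]) ++
        (false :: (List.replicate k' true ++ false :: y)) := by
      rw [insTF, hco]; rfl
    rw [h1, red'_append_cons _ _ _ (by simp),
      List.dropLast_cons_of_ne_nil (by simp),
      List.dropLast_append_of_ne_nil (by simp : (false :: y) ≠ [])]
    simp
  · have h1 : insTF w (k' + 1) = (List.replicate k' true ++ [true]) ++
        (true :: (false :: y)) := by
      rw [insTF, hw, List.take_left' (by simp),
        show List.replicate (k'+1) true ++ false :: y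
          = (List.replicate (k'+1) true ++ [false]) ++ y by simp,
        List.drop_left' (by simp), List.replicate_succ']
      simp
    rw [h1, red'_append_cons _ _ _ (by simp),
      List.dropLast_cons_of_ne_nil (by simp)]
    simp [rep_comm]

lemma caseB (w z : List Bool) (m : ℕ) (hm : 1 ≤ m)
    (hw : w = z ++ true :: List.replicate m false) :
    target w (w.length - 1) = z.length ∧
    ∃ A, red' (insTF w (w.length - 1)) = A ++ [true] ∧
         red' (insTF w z.length) = A ++ [false] := by
  obtain ⟨m', rfl⟩ : ∃ m', m = m' + 1 := ⟨m - 1, by omega⟩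
  have hlen : w.length = z.length + m' + 2 := by
    rw [hw]; simp only [List.length_append, List.length_cons, List.length_replicate, List.length_nil]; omega
  have hco : w = (z ++ true :: List.replicate m' false) ++ [false] := by
    rw [hw, List.replicate_succ']; simp
  have hd : w.getD (w.length - 1) true = false := by
    rw [List.getD_eq_getElem?_getD, ← List.getLast?_eq_getElem?, hco, List.getLast?_concat]
    rfl
  have hrev : w.reverse = List.replicate (m' + 1) false ++ true :: z.reverse := by
    rw [hw]; simp
  refine ⟨?_, (z ++ [true]).drop 1 ++ List.replicate m' false, ?_, ?_⟩
  · unfold target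
    rw [if_neg (by rw [hd]; exact Bool.false_ne_true)]
    unfold nextFalseIdx
    rw [List.drop_eq_nil_of_le (by omega), List.findIdx_nil,
      if_neg (by simp), hrev, findIdx_FT]
    omega
  · have h1 : insTF w (w.length - 1) = (z ++ [true]) ++
        ((List.replicate m' false ++ [true]) ++ [false]) := by
      rw [insTF, hco,
        List.take_left' (by simp only [List.length_append, List.length_cons, List.length_replicate, List.length_nil]; omega),
        List.drop_eq_nil_of_le (by simp only [List.length_append, List.length_cons, List.length_replicate, List.length_nil]; omega)]
      simp
    rw [h1, red'_append_cons _ _ _ (by simp), List.dropLast_concat]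
    simp
  · have h1 : insTF w z.length = (z ++ [true]) ++
        (false :: List.replicate (m' + 1) false) := by
      rw [insTF, hw, List.take_left' rfl,
        show z ++ true :: List.replicate (m'+1) false
          = (z ++ [true]) ++ List.replicate (m'+1) false by simp,
        List.drop_left' (by simp)]
      simp
    rw [h1, red'_append_cons _ _ _ (by simp),
      show (false :: List.replicate (m'+1) false : List Bool)
        = List.replicate (m'+1) false ++ [false] by
          rw [← List.replicate_succ, List.replicate_succ'],
      List.dropLast_concat]
    simp [List.replicate_succ, rep_comm]

lemma caseC (w x c : List Bool) (g : ℕ)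
    (hw : w = x ++ true :: (List.replicate g false ++ true :: (c ++ [false]))) :
    target w (x.length + g + 1) = x.length ∧
    ∃ A A', red' (insTF w (x.length + g + 1)) = A ++ true :: false :: A' ∧
            red' (insTF w x.length) = A ++ false :: true :: A' := by
  have hsplit : w = (x ++ true :: List.replicate g false) ++ (true :: (c ++ [false])) := by
    rw [hw]; simp
  have hpre : (x ++ true :: List.replicate g false).length = x.length + g + 1 := by
    simp only [List.length_append, List.length_cons, List.length_replicate]; omega
  have hd : w.getD (x.length + g + 1) true = true := by
    rw [List.getD_eq_getElem?_getD, hsplit, List.getElem?_append_right (by omega), hpre]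
    simp
  have htk : w.take (x.length + g + 1) = x ++ true :: List.replicate g false := by
    rw [hsplit, List.take_left' hpre]
  refine ⟨?_, (x ++ [true]).drop 1 ++ List.replicate g false, c, ?_, ?_⟩
  · unfold target
    rw [if_pos hd]
    unfold prevTrueIdx
    rw [htk, show (x ++ true :: List.replicate g false).reverse
        = List.replicate g false ++ true :: x.reverse by simp, findIdx_FT,
      if_pos (by omega)]
    omega
  · have hdrop : w.drop (x.length + g + 1 + 1) = c ++ [false] := by
      rw [show w = ((x ++ true :: List.replicate g false) ++ [true]) ++ (c ++ [false]) by
          rw [hw]; simp,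
        List.drop_left' (by simp only [List.length_append, List.length_cons, List.length_replicate, List.length_nil]; omega)]
    have h1 : insTF w (x.length + g + 1) = (x ++ [true]) ++
        ((List.replicate g false ++ true :: false :: c) ++ [false]) := by
      rw [insTF, htk, hdrop]; simp
    rw [h1, red'_append_cons _ _ _ (by simp), List.dropLast_concat]
    simp
  · have htk2 : w.take x.length = x := by rw [hw, List.take_left' rfl]
    have hdrop2 : w.drop (x.length + 1)
        = List.replicate g false ++ true :: (c ++ [false]) := by
      rw [show w = (x ++ [true]) ++ (List.replicate g false ++ true :: (c ++ [false])) by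
          rw [hw]; simp,
        List.drop_left' (by simp)]
    have h1 : insTF w x.length = (x ++ [true]) ++
        ((false :: (List.replicate g false ++ true :: c)) ++ [false]) := by
      rw [insTF, htk2, hdrop2]; simp
    rw [h1, red'_append_cons _ _ _ (by simp), List.dropLast_concat, ← rep_comm]
    simp

lemma caseD (w x y : List Bool) (q : ℕ)
    (hw : w = true :: (x ++ false :: (List.replicate q true ++ false :: y))) :
    target w (x.length + 1) = x.length + 1 + 1 + q ∧
    ∃ A A', red' (insTF w (x.length + 1)) = A ++ true :: false :: A' ∧
            red' (insTF w (x.length + 1 + 1 + q)) = A ++ false :: true :: A' := by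
  have hsplit : w = (true :: x) ++ false :: (List.replicate q true ++ false :: y) := by
    rw [hw]; simp
  have hd : w.getD (x.length + 1) true = false := by
    rw [List.getD_eq_getElem?_getD, hsplit,
      List.getElem?_append_right (by simp)]
    simp
  have hdrop : w.drop (x.length + 1 + 1) = List.replicate q true ++ false :: y := by
    rw [show w = ((true :: x) ++ [false]) ++ (List.replicate q true ++ false :: y) by
        rw [hw]; simp,
      List.drop_left' (by simp)]
  have htk : w.take (x.length + 1) = true :: x := by
    rw [hsplit, List.take_left' (by simp)]
  refine ⟨?_, x, List.replicate q true ++ (false :: y).dropLast, ?_, ?_⟩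
  · unfold target
    rw [if_neg (by rw [hd]; exact Bool.false_ne_true)]
    unfold nextFalseIdx
    rw [hdrop, findIdx_TF,
      if_pos (by simp only [List.length_append, List.length_cons, List.length_replicate, List.length_nil]; omega)]
  · have h1 : insTF w (x.length + 1) = ((true :: x) ++ [true]) ++
        ((false :: List.replicate q true) ++ (false :: y)) := by
      rw [insTF, htk, hdrop]; simp
    rw [h1, red'_append_cons _ _ _ (by simp),
      List.dropLast_append_of_ne_nil (by simp : (false :: y) ≠ [])]
    simp
  · have htk3 : w.take (x.length + 1 + 1 + q) = (true :: x) ++ false :: List.replicate q true := by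
      rw [show w = ((true :: x) ++ false :: List.replicate q true) ++ (false :: y) by
          rw [hw]; simp,
        List.take_left' (by simp only [List.length_append, List.length_cons, List.length_replicate, List.length_nil]; omega)]
    have hdrop3 : w.drop (x.length + 1 + 1 + q + 1) = y := by
      rw [show w = (((true :: x) ++ false :: List.replicate q true) ++ [false]) ++ y by
          rw [hw]; simp,
        List.drop_left' (by simp only [List.length_append, List.length_cons, List.length_replicate, List.length_nil]; omega)]
    have h1 : insTF w (x.length + 1 + 1 + q) = (((true :: x) ++ false :: List.replicate q true) ++ [true]) ++
        (false :: y) := by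
      rw [insTF, htk3, hdrop3]; simp
    rw [h1, red'_append_cons _ _ _ (by simp)]
    simp [rep_comm]

lemma rate_alpha (α β : ℝ) (A : List Bool) : rate α β (false :: A) (true :: A) = α := by
  unfold rate
  rw [if_pos ⟨A, rfl, rfl⟩]

lemma rate_beta (α β : ℝ) (A : List Bool) : rate α β (A ++ [true]) (A ++ [false]) = β := by
  unfold rate
  rw [if_neg, if_pos ⟨A, rfl, rfl⟩]
  rintro ⟨E, h1, h2⟩
  cases A with
  | nil => simp at h1
  | cons a A' =>
    rw [List.cons_append] at h1 h2
    injection h1 with h1a _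
    injection h2 with h2a _
    subst h1a
    simp at h2a

lemma rate_hop (α β : ℝ) (A A' : List Bool) :
    rate α β (A ++ true :: false :: A') (A ++ false :: true :: A') = 1 := by
  have hneg1 : ¬ ∃ E, A ++ true :: false :: A' = false :: E ∧
      A ++ false :: true :: A' = true :: E := by
    rintro ⟨E, h1, h2⟩
    have hs1 : A.length + 1 - A.length = 1 := by omega
    have e1 : (A ++ true :: false :: A')[A.length + 1]? = some false := by
      rw [List.getElem?_append_right (by omega), hs1]
      simp
    have e2 : (A ++ false :: true :: A')[A.length + 1]? = some true := by
      rw [List.getElem?_append_right (by omega), hs1]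
      simp
    rw [h1, List.getElem?_cons_succ] at e1
    rw [h2, List.getElem?_cons_succ] at e2
    rw [e1] at e2
    simp at e2
  have hneg2 : ¬ ∃ E, A ++ true :: false :: A' = E ++ [true] ∧
      A ++ false :: true :: A' = E ++ [false] := by
    rintro ⟨E, h1, h2⟩
    have hl : A.length < E.length := by
      have := congrArg List.length h1
      simp only [List.length_append, List.length_cons, List.length_nil] at this
      omega
    have hs0 : A.length - A.length = 0 := by omega
    have e1 : (A ++ true :: false :: A')[A.length]? = some true := by
      rw [List.getElem?_append_right (le_refl _), hs0]
      simp
    have e2 : (A ++ false :: true :: A')[A.length]? = some false := by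
      rw [List.getElem?_append_right (le_refl _), hs0]
      simp
    rw [h1, List.getElem?_append_left hl] at e1
    rw [h2, List.getElem?_append_left hl] at e2
    rw [e1] at e2
    simp at e2
  unfold rate
  rw [if_neg hneg1, if_neg hneg2, if_pos ⟨A, A', rfl, rfl⟩]

lemma zpow_step (α : ℝ) (h : α ≠ 0) (c : ℕ) :
    α ^ (-((c : ℤ) + 1)) * α = α ^ (-(c : ℤ)) := by
  have h2 : -((c : ℤ) + 1) + 1 = -(c : ℤ) := by ring
  calc α ^ (-((c : ℤ) + 1)) * α = α ^ (-((c : ℤ) + 1)) * α ^ (1 : ℤ) := by rw [zpow_one]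
    _ = α ^ (-((c : ℤ) + 1) + 1) := (zpow_add₀ h _ _).symm
    _ = α ^ (-(c : ℤ)) := by rw [h2]

end Aux

/-- for a marked tree `T̂ ∈ F(C' → C)`,
`μ̂(T̂) = μ(f(T̂)) · W(C' → C)`. -/
theorem muHat_eq_mu_mul_rate (n : ℕ) (hn : 1 ≤ n) (α β : ℝ)
    (hα : α ∈ Set.Ioc (0:ℝ) 1) (hβ : β ∈ Set.Ioc (0:ℝ) 1)
    (M : MTree) (hM : M.forget.numLeaves = n + 2) (C C' : List Bool)
    (hC' : M.forget.red = C') (hC : (piM M).forget.red = C) :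
    muHat α β M = mu α β M.forget * rate α β C' C := by
  have hαne : α ≠ 0 := ne_of_gt hα.1
  have hβne : β ≠ 0 := ne_of_gt hβ.1
  have hilt : M.markIdx < M.collapseT.numLeaves := Aux.markIdx_lt M
  have hnum : M.collapseT.numLeaves = n + 1 := by
    have h := Aux.numLeaves_forget_expand M.collapseT M.markIdx
    rw [Aux.expand_collapseT M, hM] at h
    omega
  obtain ⟨l0, r0, hT0⟩ : ∃ l r, M.collapseT = PTree.node l r := by
    cases hT : M.collapseT with
    | leaf => rw [hT] at hnum; simp [PTree.numLeaves] at hnum; omega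
    | node l r => exact ⟨l, r, rfl⟩
  set w0 : List Bool := M.collapseT.dirs with hw0
  set i : ℕ := M.markIdx with hidef
  have hlen : w0.length = n + 1 := by
    rw [hw0, hT0, Aux.length_dirs_node, ← hT0, hnum]
  have hhead : w0.head? = some true := by
    rw [hw0, hT0]; exact Aux.head?_dirs_node l0 r0
  have hlast : w0.getLast? = some false := by
    rw [hw0, hT0]; exact Aux.getLast?_dirs_node l0 r0
  have hin : i ≤ n := by omega
  have hCd : M.forget.dirs = Aux.insTF w0 i := by
    conv_lhs => rw [← Aux.expand_collapseT M]
    exact Aux.dirs_forget_expand _ _ hilt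
  have hpiM : piM M = expand M.collapseT (target w0 i) := rfl
  have hmuL : lCountM M = M.collapseT.lCount := by
    conv_lhs => rw [← Aux.expand_collapseT M]
    exact Aux.lCountM_expand _ _
  have hmuR : rCountM M = M.collapseT.rCount := by
    conv_lhs => rw [← Aux.expand_collapseT M]
    exact Aux.rCountM_expand _ _
  have hfl : M.forget.lCount = M.collapseT.lCount + (if i = 0 then 1 else 0) := by
    conv_lhs => rw [← Aux.expand_collapseT M]
    exact Aux.lCount_forget_expand _ _ hilt
  have hfr : M.forget.rCount = M.collapseT.rCount + (if i + 1 = n + 1 then 1 else 0) := by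
    conv_lhs => rw [← Aux.expand_collapseT M]
    rw [Aux.rCount_forget_expand _ _ hilt, hnum]
  by_cases hi0 : i = 0
  · -- injection case : rate α
    obtain ⟨k, y, hw⟩ := Aux.bool_split false w0 (Aux.mem_of_getLast?' hlast)
    rw [Bool.not_false] at hw
    have hk : 1 ≤ k := by
      rcases Nat.eq_zero_or_pos k with h0 | h1
      · rw [h0, List.replicate_zero, List.nil_append] at hw
        rw [hw] at hhead; simp at hhead
      · exact h1
    obtain ⟨htar, A, hA1, hA2⟩ := Aux.caseA w0 y k hk hw
    have hkn : k < n + 1 := by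
      have h := congrArg List.length hw
      simp only [List.length_append, List.length_replicate, List.length_cons, List.length_nil, hlen] at h
      omega
    have hC'v : C' = false :: A := by
      rw [← hC']
      show Aux.red' M.forget.dirs = _
      rw [hCd, hi0, hA1]
    have htlt : target w0 i < M.collapseT.numLeaves := by
      rw [hi0, htar, hnum]; exact hkn
    have hCd2 : (piM M).forget.dirs = Aux.insTF w0 (target w0 i) := by
      rw [hpiM]; exact Aux.dirs_forget_expand _ _ htlt
    have hCv : C = true :: A := by
      rw [← hC]
      show Aux.red' (piM M).forget.dirs = _
      rw [hCd2, hi0, htar, hA2]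
    rw [hC'v, hCv, Aux.rate_alpha]
    simp only [muHat, mu]
    rw [hmuL, hmuR, hfl, hfr, if_pos hi0, if_neg (by omega), Nat.add_zero]
    have key := Aux.zpow_step α hαne M.collapseT.lCount
    push_cast
    rw [← key]
    simp only [add_zero]
    ring
  · by_cases hiN : i = n
    · -- extraction case : rate β
      have hmT : true ∈ w0.reverse := by
        rw [List.mem_reverse]
        obtain ⟨t0, hco⟩ := Aux.cons_of_head? hhead
        rw [hco]; exact List.mem_cons_self
      obtain ⟨m, y', hrev⟩ := Aux.bool_split true w0.reverse hmT
      rw [Bool.not_true] at hrev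
      have hw : w0 = y'.reverse ++ true :: List.replicate m false := by
        have h := congrArg List.reverse hrev
        rw [List.reverse_reverse] at h
        rw [h]; simp
      have hm : 1 ≤ m := by
        rcases Nat.eq_zero_or_pos m with h0 | h1
        · rw [h0, List.replicate_zero] at hw
          rw [hw, List.getLast?_concat] at hlast
          simp at hlast
        · exact h1
      obtain ⟨htar, A, hB1, hB2⟩ := Aux.caseB w0 y'.reverse m hm hw
      have hieq : i = w0.length - 1 := by omega
      have hzn : y'.reverse.length < n + 1 := by
        have h := congrArg List.length hw
        simp only [List.length_append, List.length_cons, List.length_replicate, hlen] at h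
        omega
      have hC'v : C' = A ++ [true] := by
        rw [← hC']
        show Aux.red' M.forget.dirs = _
        rw [hCd, hieq, hB1]
      have htlt : target w0 i < M.collapseT.numLeaves := by
        rw [hieq, htar, hnum]; exact hzn
      have hCd2 : (piM M).forget.dirs = Aux.insTF w0 (target w0 i) := by
        rw [hpiM]; exact Aux.dirs_forget_expand _ _ htlt
      have hCv : C = A ++ [false] := by
        rw [← hC]
        show Aux.red' (piM M).forget.dirs = _
        rw [hCd2, hieq, htar, hB2]
      rw [hC'v, hCv, Aux.rate_beta]
      simp only [muHat, mu]
      rw [hmuL, hmuR, hfl, hfr, if_neg hi0, if_pos (by omega), Nat.add_zero]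
      have key := Aux.zpow_step β hβne M.collapseT.rCount
      push_cast
      rw [← key]
      ring
    · -- bulk cases : rate 1
      have hi1 : 1 ≤ i := by omega
      have hiltn : i < n := by omega
      obtain ⟨t0, hco⟩ := Aux.cons_of_head? hhead
      obtain ⟨i', hi'⟩ : ∃ i', i = i' + 1 := ⟨i - 1, by omega⟩
      have hdrne : w0.drop (i + 1) ≠ [] := by
        intro hnil
        have := congrArg List.length hnil
        rw [List.length_drop, hlen] at this
        simp at this
        omega
      have hdlast : (w0.drop (i + 1)).getLast? = some false := by
        calc (w0.drop (i + 1)).getLast?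
            = (w0.take (i + 1) ++ w0.drop (i + 1)).getLast? :=
              (List.getLast?_append_of_ne_nil _ hdrne).symm
          _ = w0.getLast? := by rw [List.take_append_drop]
          _ = some false := hlast
      have higet : i < w0.length := by omega
      by_cases hd : w0.getD i true = true
      · -- mark is a left child
        have hgi : w0[i]'higet = true := by
          have h1 : w0[i]? = some (w0[i]'higet) := List.getElem?_eq_getElem higet
          rw [List.getD_eq_getElem?_getD, h1] at hd
          simpa using hd
        have hmemT : true ∈ (w0.take i).reverse := by
          rw [List.mem_reverse, hi', hco, List.take_succ_cons]
          exact List.mem_cons_self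
        obtain ⟨g, z, hsp⟩ := Aux.bool_split true (w0.take i).reverse hmemT
        rw [Bool.not_true] at hsp
        have htk : w0.take i = z.reverse ++ true :: List.replicate g false := by
          have h := congrArg List.reverse hsp
          rw [List.reverse_reverse] at h
          rw [h]; simp
        have hglt : z.reverse.length + g + 1 = i := by
          have h := congrArg List.length htk
          simp only [List.length_take, List.length_append, List.length_cons,
            List.length_replicate, List.length_reverse, List.length_nil, hlen] at h
          rw [List.length_reverse]
          omega
        obtain ⟨c, hcy⟩ : ∃ c, w0.drop (i + 1) = c ++ [false] := by
          refine ⟨(w0.drop (i + 1)).dropLast, ?_⟩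
          have h1 := List.getLast?_eq_getLast hdrne
          rw [hdlast] at h1
          injection h1 with h1
          conv_lhs => rw [← List.dropLast_append_getLast hdrne]
          rw [← h1]
        have hw : w0 = z.reverse ++ true ::
            (List.replicate g false ++ true :: (c ++ [false])) := by
          conv_lhs => rw [← List.take_append_drop i w0]
          rw [htk, List.drop_eq_getElem_cons higet, hgi, hcy]
          simp
        obtain ⟨htar, A, A', hD1, hD2⟩ := Aux.caseC w0 z.reverse c g hw
        rw [hglt] at htar hD1
        have hC'v : C' = A ++ true :: false :: A' := by
          rw [← hC']
          show Aux.red' M.forget.dirs = _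
          rw [hCd, hD1]
        have htlt : target w0 i < M.collapseT.numLeaves := by
          rw [htar, hnum]; omega
        have hCd2 : (piM M).forget.dirs = Aux.insTF w0 (target w0 i) := by
          rw [hpiM]; exact Aux.dirs_forget_expand _ _ htlt
        have hCv : C = A ++ false :: true :: A' := by
          rw [← hC]
          show Aux.red' (piM M).forget.dirs = _
          rw [hCd2, htar, hD2]
        rw [hC'v, hCv, Aux.rate_hop, mul_one]
        simp only [muHat, mu]
        rw [hmuL, hmuR, hfl, hfr, if_neg hi0, if_neg (by omega)]
        simp
      · -- mark is a right child
        have hdf : w0.getD i true = false := by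
          cases h : w0.getD i true
          · rfl
          · exact absurd h hd
        have hgi : w0[i]'higet = false := by
          have h1 : w0[i]? = some (w0[i]'higet) := List.getElem?_eq_getElem higet
          rw [List.getD_eq_getElem?_getD, h1] at hdf
          simpa using hdf
        obtain ⟨q, y, hsp⟩ := Aux.bool_split false (w0.drop (i + 1))
          (Aux.mem_of_getLast?' hdlast)
        rw [Bool.not_false] at hsp
        have htk : w0.take i = true :: t0.take i' := by
          rw [hi', hco, List.take_succ_cons]
        have hxlen : (t0.take i').length = i' := by
          have hlt : w0.length = t0.length + 1 := by rw [hco]; simp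
          rw [List.length_take]
          omega
        have hw : w0 = true :: (t0.take i' ++ false ::
            (List.replicate q true ++ false :: y)) := by
          conv_lhs => rw [← List.take_append_drop i w0]
          rw [htk, List.drop_eq_getElem_cons higet, hgi, hsp]
          simp
        obtain ⟨htar, A, A', hE1, hE2⟩ := Aux.caseD w0 (t0.take i') y q hw
        rw [hxlen] at htar hE1 hE2
        have hii : i' + 1 = i := hi'.symm
        rw [hii] at htar hE1 hE2
        have hC'v : C' = A ++ true :: false :: A' := by
          rw [← hC']
          show Aux.red' M.forget.dirs = _
          rw [hCd, hE1]
        have hjn : i + 1 + q < n + 1 := by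
          have h := congrArg List.length hw
          simp only [List.length_cons, List.length_append, List.length_replicate,
            List.length_nil, hxlen, hlen] at h
          omega
        have htlt : target w0 i < M.collapseT.numLeaves := by
          rw [htar, hnum]; omega
        have hCd2 : (piM M).forget.dirs = Aux.insTF w0 (target w0 i) := by
          rw [hpiM]; exact Aux.dirs_forget_expand _ _ htlt
        have hCv : C = A ++ false :: true :: A' := by
          rw [← hC]
          show Aux.red' (piM M).forget.dirs = _
          rw [hCd2, htar, hE2]
        rw [hC'v, hCv, Aux.rate_hop, mul_one]
        simp only [muHat, mu]
        rw [hmuL, hmuR, hfl, hfr, if_neg hi0, if_neg (by omega)]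
        simp
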